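/- Let CS₀ be the set of 4-tuples (p₁,p₂,p₃,p₄) of distinct points in counterclockwise order on the unit circle with p₃ = -p₁ and p₄ = -p₂, and let D = {g_β : |β| < 1} be the set of special Möbius transformations. Then the evaluation map (P, g_β) ↦ (g_β(p₁), g_β(p₂), g_β(p₃), g_β(p₄)) from CS₀ × D to the configuration space CS of ordered 4-tuples of distinct points on the circle in counterclockwise order is a bijection. -/

import Mathlib

open Complex

/-- The special Möbius transformation `g_β`. -/
noncomputable def moebius (β z : ℂ) : ℂ := (z - β) / (1 - (starRingEnd ℂ) β * z)

/-- Ordered 4-tuples of distinct points on the unit circle in counterclockwise order. -/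
def inCCWOrder (P : ℂ × ℂ × ℂ × ℂ) : Prop :=
  ‖P.1‖ = 1 ∧
    ∃ θ₂ θ₃ θ₄ : ℝ, 0 < θ₂ ∧ θ₂ < θ₃ ∧ θ₃ < θ₄ ∧ θ₄ < 2 * Real.pi ∧
      P.2.1 = P.1 * Complex.exp (θ₂ * Complex.I) ∧
      P.2.2.1 = P.1 * Complex.exp (θ₃ * Complex.I) ∧
      P.2.2.2 = P.1 * Complex.exp (θ₄ * Complex.I)

/-- The configuration space `CS`. -/
def CS : Set (ℂ × ℂ × ℂ × ℂ) := {P | inCCWOrder P}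

/-- The core `CS₀`: configurations whose opposite points are antipodal. -/
def CScore : Set (ℂ × ℂ × ℂ × ℂ) :=
  {P ∈ CS | P.2.2.1 = -P.1 ∧ P.2.2.2 = -P.2.1}

lemma denom_ne {β z : ℂ} (hβ : ‖β‖ < 1) (hz : ‖z‖ ≤ 1) :
    1 - (starRingEnd ℂ) β * z ≠ 0 := by
  intro h
  have h1 : (starRingEnd ℂ) β * z = 1 := by linear_combination -h
  have := congrArg norm h1
  rw [norm_mul, norm_one, Complex.norm_conj] at this
  nlinarith [norm_nonneg β, norm_nonneg z]

lemma denom_ne' {β z : ℂ} (hβ : ‖β‖ < 1) (hz : ‖z‖ ≤ 1) :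
    1 + (starRingEnd ℂ) β * z ≠ 0 := by
  intro h
  have h1 : (starRingEnd ℂ) β * z = -1 := by linear_combination h
  have := congrArg norm h1
  rw [norm_mul, Complex.norm_conj] at this
  rw [norm_neg, norm_one] at this
  nlinarith [norm_nonneg β, norm_nonneg z]

lemma unit_mul_conj {z : ℂ} (hz : ‖z‖ = 1) : z * (starRingEnd ℂ) z = 1 := by
  rw [Complex.mul_conj, Complex.normSq_eq_norm_sq, hz]; norm_num

lemma moebius_abs {β z : ℂ} (hβ : ‖β‖ < 1) (hz : ‖z‖ = 1) :
    ‖moebius β z‖ = 1 := by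
  have hd := denom_ne hβ hz.le
  have h2 : (z - β) * (starRingEnd ℂ) z = 1 - β * (starRingEnd ℂ) z := by
    have := unit_mul_conj hz; linear_combination this
  have key : ‖z - β‖ = ‖1 - (starRingEnd ℂ) β * z‖ := by
    calc ‖z - β‖ = ‖(z - β) * (starRingEnd ℂ) z‖ := by
          rw [norm_mul, Complex.norm_conj, hz, mul_one]
      _ = ‖1 - β * (starRingEnd ℂ) z‖ := by rw [h2]
      _ = ‖1 - (starRingEnd ℂ) β * z‖ := by
          rw [← Complex.norm_conj (1 - β * (starRingEnd ℂ) z)]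
          congr 1
          simp [map_sub, map_mul]
  rw [moebius, norm_div, key, div_self]
  intro h
  exact hd (by rwa [norm_eq_zero] at h)

lemma moebius_inj {β a b : ℂ} (hβ : ‖β‖ < 1) (ha : ‖a‖ ≤ 1)
    (hb : ‖b‖ ≤ 1) (h : moebius β a = moebius β b) : a = b := by
  have hda := denom_ne hβ ha
  have hdb := denom_ne hβ hb
  rw [moebius, moebius, div_eq_div_iff hda hdb] at h
  have hne : (1 : ℂ) - (starRingEnd ℂ) β * β ≠ 0 := denom_ne hβ hβ.le
  have : (a - b) * (1 - (starRingEnd ℂ) β * β) = 0 := by linear_combination h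
  rcases mul_eq_zero.mp this with h' | h'
  · exact sub_eq_zero.mp h'
  · exact absurd h' hne

lemma moebius_moebius {β z : ℂ} (hβ : ‖β‖ < 1) (hz : ‖z‖ ≤ 1) :
    moebius (-β) (moebius β z) = z := by
  have h1 := denom_ne hβ hz
  have h2 : (1 : ℂ) - (starRingEnd ℂ) β * β ≠ 0 := denom_ne hβ hβ.le
  have hden : 1 + (starRingEnd ℂ) β * moebius β z
      = (1 - (starRingEnd ℂ) β * β) / (1 - (starRingEnd ℂ) β * z) := by
    rw [moebius]; field_simp; ring
  have hden2 : 1 - (starRingEnd ℂ) (-β) * moebius β z ≠ 0 := by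
    rw [map_neg, neg_mul, sub_neg_eq_add, hden]
    exact div_ne_zero h2 h1
  show (moebius β z - -β) / (1 - (starRingEnd ℂ) (-β) * moebius β z) = z
  have hm : moebius β z = (z - β) / (1 - (starRingEnd ℂ) β * z) := rfl
  rw [div_eq_iff hden2, hm, map_neg]
  have h1' : 1 - z * (starRingEnd ℂ) β ≠ 0 := by rw [mul_comm]; exact h1
  field_simp
  ring


noncomputable def fArg (β : ℂ) (θ : ℝ) : ℝ :=
  θ + Complex.arg (moebius β (Complex.exp (θ * I)) / Complex.exp (θ * I))

lemma w_abs {β : ℂ} (hβ : ‖β‖ < 1) (θ : ℝ) :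
    ‖moebius β (Complex.exp (θ * I)) / Complex.exp (θ * I)‖ = 1 := by
  rw [norm_div, moebius_abs hβ (Complex.norm_exp_ofReal_mul_I θ), Complex.norm_exp_ofReal_mul_I]
  norm_num

lemma w_ne_neg_one {β : ℂ} (hβ : ‖β‖ < 1) (θ : ℝ) :
    moebius β (Complex.exp (θ * I)) / Complex.exp (θ * I) ≠ -1 := by
  intro h
  set e := Complex.exp (θ * I) with he
  have habs : ‖e‖ = 1 := Complex.norm_exp_ofReal_mul_I θ
  have hene : e ≠ 0 := Complex.exp_ne_zero _
  have hd := denom_ne hβ habs.le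
  have hec : e * (starRingEnd ℂ) e = 1 := unit_mul_conj habs
  rw [div_eq_iff hene, moebius, div_eq_iff hd] at h
  have key : (starRingEnd ℂ) β * e + (starRingEnd ℂ) ((starRingEnd ℂ) β * e) = 2 := by
    rw [map_mul, Complex.conj_conj]
    linear_combination (-(starRingEnd ℂ) e) * h + (2 - (starRingEnd ℂ) β * e) * hec
  rw [Complex.add_conj] at key
  have hre : ((starRingEnd ℂ) β * e).re = 1 := by
    have := congrArg Complex.re key
    simpa using this
  have hle := Complex.re_le_norm ((starRingEnd ℂ) β * e)
  rw [hre, norm_mul, Complex.norm_conj, habs, mul_one] at hle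
  linarith

lemma w_slit {β : ℂ} (hβ : ‖β‖ < 1) (θ : ℝ) :
    moebius β (Complex.exp (θ * I)) / Complex.exp (θ * I) ∈ Complex.slitPlane := by
  set w := moebius β (Complex.exp (θ * I)) / Complex.exp (θ * I) with hw
  rw [Complex.mem_slitPlane_iff]
  by_contra hcon
  push_neg at hcon
  obtain ⟨hre, him⟩ := hcon
  have habs := w_abs hβ θ
  rw [← hw] at habs
  have hwre : w = (w.re : ℂ) := by
    apply Complex.ext <;> simp [him]
  rw [hwre, Complex.norm_real, Real.norm_eq_abs, abs_of_nonpos hre] at habs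
  have : w = -1 := by rw [hwre, show w.re = -1 by linarith]; norm_num
  exact w_ne_neg_one hβ θ this

lemma fArg_continuous {β : ℂ} (hβ : ‖β‖ < 1) : Continuous (fArg β) := by
  have hce : Continuous (fun θ : ℝ => Complex.exp (θ * I)) :=
    Complex.continuous_exp.comp (Complex.continuous_ofReal.mul continuous_const)
  have hcw : Continuous (fun θ : ℝ => moebius β (Complex.exp (θ * I)) / Complex.exp (θ * I)) := by
    apply Continuous.div _ hce (fun θ => Complex.exp_ne_zero _)
    unfold moebius
    apply Continuous.div (hce.sub continuous_const)
      (continuous_const.sub (continuous_const.mul hce))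
    exact fun θ => denom_ne hβ (Complex.norm_exp_ofReal_mul_I θ).le
  rw [continuous_iff_continuousAt]
  intro θ
  have h2 : ContinuousAt
      (fun θ : ℝ => Complex.arg (moebius β (Complex.exp (θ * I)) / Complex.exp (θ * I))) θ :=
    ContinuousAt.comp (g := Complex.arg)
      (f := fun θ : ℝ => moebius β (Complex.exp (θ * I)) / Complex.exp (θ * I))
      (Complex.continuousAt_arg (w_slit hβ θ)) hcw.continuousAt
  exact continuousAt_id.add h2

lemma fArg_exp {β : ℂ} (hβ : ‖β‖ < 1) (θ : ℝ) :
    Complex.exp (fArg β θ * I) = moebius β (Complex.exp (θ * I)) := by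
  set w := moebius β (Complex.exp (θ * I)) / Complex.exp (θ * I) with hw
  have habs := w_abs hβ θ
  have h1 : Complex.exp (Complex.arg w * I) = w := by
    have := Complex.norm_mul_exp_arg_mul_I w
    rwa [habs, Complex.ofReal_one, one_mul] at this
  rw [fArg]
  push_cast
  rw [add_mul, Complex.exp_add, h1, hw]
  field_simp

lemma fArg_period (β : ℂ) (θ : ℝ) : fArg β (θ + 2 * Real.pi) = fArg β θ + 2 * Real.pi := by
  have hexp : Complex.exp ((↑(θ + 2 * Real.pi)) * I) = Complex.exp (θ * I) := by
    push_cast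
    rw [add_mul, Complex.exp_add, Complex.exp_two_pi_mul_I, mul_one]
  rw [fArg, fArg, hexp]
  push_cast
  ring

lemma fArg_strictMonoOn {β : ℂ} (hβ : ‖β‖ < 1) (α : ℝ) :
    StrictMonoOn (fArg β) (Set.Icc α (α + 2 * Real.pi)) := by
  have hpi := Real.pi_pos
  have hle : α ≤ α + 2 * Real.pi := by linarith
  have hend : fArg β (α + 2 * Real.pi) = fArg β α + 2 * Real.pi := fArg_period β α
  apply ContinuousOn.strictMonoOn_of_injOn_Icc hle (by rw [hend]; linarith)
    (fArg_continuous hβ).continuousOn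
  intro x hx y hy hxy
  have hme : moebius β (Complex.exp (x * I)) = moebius β (Complex.exp (y * I)) := by
    rw [← fArg_exp hβ, ← fArg_exp hβ, hxy]
  have hee : Complex.exp ((x:ℝ) * I) = Complex.exp ((y:ℝ) * I) :=
    moebius_inj hβ (Complex.norm_exp_ofReal_mul_I x).le (Complex.norm_exp_ofReal_mul_I y).le hme
  rw [Complex.exp_eq_exp_iff_exists_int] at hee
  obtain ⟨n, hn⟩ := hee
  have hnr : x = y + n * (2 * Real.pi) := by
    have := congrArg Complex.im hn
    simpa using this
  obtain ⟨hx1, hx2⟩ := hx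
  obtain ⟨hy1, hy2⟩ := hy
  have hn1 : (-1 : ℝ) ≤ (n : ℝ) := by nlinarith
  have hn2 : (n : ℝ) ≤ 1 := by nlinarith
  have hn1' : (-1 : ℤ) ≤ n := by exact_mod_cast hn1
  have hn2' : n ≤ (1 : ℤ) := by exact_mod_cast hn2
  interval_cases n
  · push_cast at hnr
    have hxα : x = α := by linarith
    have hyα : y = α + 2 * Real.pi := by linarith
    rw [hxα, hyα, hend] at hxy
    linarith
  · push_cast at hnr; linarith
  · push_cast at hnr
    have hyα : y = α := by linarith
    have hxα : x = α + 2 * Real.pi := by linarith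
    rw [hxα, hyα, hend] at hxy
    linarith

lemma moebius_mem_CS {β : ℂ} (hβ : ‖β‖ < 1) {P : ℂ × ℂ × ℂ × ℂ} (hP : P ∈ CS) :
    (moebius β P.1, moebius β P.2.1, moebius β P.2.2.1, moebius β P.2.2.2) ∈ CS := by
  obtain ⟨h1, θ₂, θ₃, θ₄, h02, h23, h34, h42, e2, e3, e4⟩ := hP
  have hpi := Real.pi_pos
  set α := Complex.arg P.1 with hα
  have hP1 : P.1 = Complex.exp (α * I) := by
    have := Complex.norm_mul_exp_arg_mul_I P.1
    rw [h1, Complex.ofReal_one, one_mul] at this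
    exact this.symm
  have key : ∀ θ : ℝ, P.1 * Complex.exp (θ * I) = Complex.exp ((↑(α + θ)) * I) := by
    intro θ
    rw [hP1, ← Complex.exp_add]
    congr 1
    push_cast
    ring
  have hmono := fArg_strictMonoOn hβ α
  have mem0 : α ∈ Set.Icc α (α + 2 * Real.pi) := by constructor <;> [linarith; linarith]
  have mem2 : α + θ₂ ∈ Set.Icc α (α + 2 * Real.pi) := by constructor <;> [linarith; linarith]
  have mem3 : α + θ₃ ∈ Set.Icc α (α + 2 * Real.pi) := by constructor <;> [linarith; linarith]
  have mem4 : α + θ₄ ∈ Set.Icc α (α + 2 * Real.pi) := by constructor <;> [linarith; linarith]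
  have mem5 : α + 2 * Real.pi ∈ Set.Icc α (α + 2 * Real.pi) := by
    constructor <;> [linarith; linarith]
  have l02 : fArg β α < fArg β (α + θ₂) := hmono mem0 mem2 (by linarith)
  have l23 : fArg β (α + θ₂) < fArg β (α + θ₃) := hmono mem2 mem3 (by linarith)
  have l34 : fArg β (α + θ₃) < fArg β (α + θ₄) := hmono mem3 mem4 (by linarith)
  have l45 : fArg β (α + θ₄) < fArg β (α + 2 * Real.pi) := hmono mem4 mem5 (by linarith)
  rw [fArg_period] at l45
  refine ⟨moebius_abs hβ h1, fArg β (α + θ₂) - fArg β α, fArg β (α + θ₃) - fArg β α,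
    fArg β (α + θ₄) - fArg β α, by linarith, by linarith, by linarith, by linarith, ?_, ?_, ?_⟩
  · show moebius β P.2.1 = moebius β P.1 * _
    rw [e2, key θ₂, ← fArg_exp hβ (α + θ₂), hP1, ← fArg_exp hβ α, ← Complex.exp_add]
    congr 1
    push_cast
    ring
  · show moebius β P.2.2.1 = moebius β P.1 * _
    rw [e3, key θ₃, ← fArg_exp hβ (α + θ₃), hP1, ← fArg_exp hβ α, ← Complex.exp_add]
    congr 1
    push_cast
    ring
  · show moebius β P.2.2.2 = moebius β P.1 * _
    rw [e4, key θ₄, ← fArg_exp hβ (α + θ₄), hP1, ← fArg_exp hβ α, ← Complex.exp_add]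
    congr 1
    push_cast
    ring

lemma conjD_mul {q₁ q₂ q₃ q₄ : ℂ} (h₁ : ‖q₁‖ = 1) (h₂ : ‖q₂‖ = 1)
    (h₃ : ‖q₃‖ = 1) (h₄ : ‖q₄‖ = 1) :
    (starRingEnd ℂ) (q₁*q₃ - q₂*q₄) * (q₁*q₂*q₃*q₄) = q₂*q₄ - q₁*q₃ := by
  have hne₁ : q₁ ≠ 0 := fun h => by simp [h] at h₁
  have hne₂ : q₂ ≠ 0 := fun h => by simp [h] at h₂
  have hne₃ : q₃ ≠ 0 := fun h => by simp [h] at h₃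
  have hne₄ : q₄ ≠ 0 := fun h => by simp [h] at h₄
  have hc₁ : (starRingEnd ℂ) q₁ = q₁⁻¹ := eq_inv_of_mul_eq_one_left
    (by rw [mul_comm]; exact unit_mul_conj h₁)
  have hc₂ : (starRingEnd ℂ) q₂ = q₂⁻¹ := eq_inv_of_mul_eq_one_left
    (by rw [mul_comm]; exact unit_mul_conj h₂)
  have hc₃ : (starRingEnd ℂ) q₃ = q₃⁻¹ := eq_inv_of_mul_eq_one_left
    (by rw [mul_comm]; exact unit_mul_conj h₃)
  have hc₄ : (starRingEnd ℂ) q₄ = q₄⁻¹ := eq_inv_of_mul_eq_one_left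
    (by rw [mul_comm]; exact unit_mul_conj h₄)
  have iv₁ : q₁⁻¹ * q₁ = 1 := inv_mul_cancel₀ hne₁
  have iv₂ : q₂⁻¹ * q₂ = 1 := inv_mul_cancel₀ hne₂
  have iv₃ : q₃⁻¹ * q₃ = 1 := inv_mul_cancel₀ hne₃
  have iv₄ : q₄⁻¹ * q₄ = 1 := inv_mul_cancel₀ hne₄
  simp only [map_sub, map_mul, hc₁, hc₂, hc₃, hc₄]
  calc (q₁⁻¹ * q₃⁻¹ - q₂⁻¹ * q₄⁻¹) * (q₁*q₂*q₃*q₄)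
      = q₂*q₄*((q₁⁻¹*q₁)*(q₃⁻¹*q₃)) - q₁*q₃*((q₂⁻¹*q₂)*(q₄⁻¹*q₄)) := by ring
    _ = q₂*q₄ - q₁*q₃ := by rw [iv₁, iv₂, iv₃, iv₄]; ring

lemma conjN_mul {q₁ q₂ q₃ q₄ : ℂ} (h₁ : ‖q₁‖ = 1) (h₂ : ‖q₂‖ = 1)
    (h₃ : ‖q₃‖ = 1) (h₄ : ‖q₄‖ = 1) :
    (starRingEnd ℂ) ((q₁+q₃)*(q₂*q₄) - (q₂+q₄)*(q₁*q₃)) * (q₁*q₂*q₃*q₄)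
      = (q₁ + q₃) - (q₂ + q₄) := by
  have hne₁ : q₁ ≠ 0 := fun h => by simp [h] at h₁
  have hne₂ : q₂ ≠ 0 := fun h => by simp [h] at h₂
  have hne₃ : q₃ ≠ 0 := fun h => by simp [h] at h₃
  have hne₄ : q₄ ≠ 0 := fun h => by simp [h] at h₄
  have hc₁ : (starRingEnd ℂ) q₁ = q₁⁻¹ := eq_inv_of_mul_eq_one_left
    (by rw [mul_comm]; exact unit_mul_conj h₁)
  have hc₂ : (starRingEnd ℂ) q₂ = q₂⁻¹ := eq_inv_of_mul_eq_one_left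
    (by rw [mul_comm]; exact unit_mul_conj h₂)
  have hc₃ : (starRingEnd ℂ) q₃ = q₃⁻¹ := eq_inv_of_mul_eq_one_left
    (by rw [mul_comm]; exact unit_mul_conj h₃)
  have hc₄ : (starRingEnd ℂ) q₄ = q₄⁻¹ := eq_inv_of_mul_eq_one_left
    (by rw [mul_comm]; exact unit_mul_conj h₄)
  have iv₁ : q₁⁻¹ * q₁ = 1 := inv_mul_cancel₀ hne₁
  have iv₂ : q₂⁻¹ * q₂ = 1 := inv_mul_cancel₀ hne₂
  have iv₃ : q₃⁻¹ * q₃ = 1 := inv_mul_cancel₀ hne₃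
  have iv₄ : q₄⁻¹ * q₄ = 1 := inv_mul_cancel₀ hne₄
  simp only [map_sub, map_add, map_mul, hc₁, hc₂, hc₃, hc₄]
  calc ((q₁⁻¹ + q₃⁻¹) * (q₂⁻¹ * q₄⁻¹) - (q₂⁻¹ + q₄⁻¹) * (q₁⁻¹ * q₃⁻¹)) * (q₁*q₂*q₃*q₄)
      = (q₃*((q₁⁻¹*q₁)*(q₂⁻¹*q₂)*(q₄⁻¹*q₄)) + q₁*((q₃⁻¹*q₃)*(q₂⁻¹*q₂)*(q₄⁻¹*q₄)))
        - (q₄*((q₂⁻¹*q₂)*(q₁⁻¹*q₁)*(q₃⁻¹*q₃)) + q₂*((q₄⁻¹*q₄)*(q₁⁻¹*q₁)*(q₃⁻¹*q₃))) := by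
        ring
    _ = (q₁ + q₃) - (q₂ + q₄) := by rw [iv₁, iv₂, iv₃, iv₄]; ring

lemma exp_sub_exp (x y : ℝ) :
    Complex.exp (x * I) - Complex.exp (y * I)
      = 2 * (Real.sin ((x - y)/2) : ℂ) * I * Complex.exp ((((x + y)/2 : ℝ) : ℂ) * I) := by
  have h1 : Complex.exp ((((x-y)/2 : ℝ) : ℂ) * I) - Complex.exp (-(((x-y)/2 : ℝ) : ℂ) * I)
      = 2 * Complex.sin (((x-y)/2 : ℝ) : ℂ) * I := by
    rw [Complex.exp_mul_I, Complex.exp_mul_I, Complex.sin_neg, Complex.cos_neg]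
    ring
  have hx : (x : ℂ) * I = (((x+y)/2 : ℝ) : ℂ) * I + (((x-y)/2 : ℝ) : ℂ) * I := by
    push_cast; ring
  have hy : (y : ℂ) * I = (((x+y)/2 : ℝ) : ℂ) * I + (-(((x-y)/2 : ℝ) : ℂ)) * I := by
    push_cast; ring
  rw [hx, hy, Complex.exp_add, Complex.exp_add, Complex.ofReal_sin]
  linear_combination Complex.exp ((((x+y)/2 : ℝ) : ℂ) * I) * h1

lemma key_ineq (α θ₂ θ₃ θ₄ : ℝ) (h02 : 0 < θ₂) (h23 : θ₂ < θ₃) (h34 : θ₃ < θ₄)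
    (h42 : θ₄ < 2 * Real.pi) :
    Complex.normSq
      ((Complex.exp ((α:ℝ) * I) + Complex.exp ((↑(α+θ₃)) * I))
          * (Complex.exp ((↑(α+θ₂)) * I) * Complex.exp ((↑(α+θ₄)) * I))
        - (Complex.exp ((↑(α+θ₂)) * I) + Complex.exp ((↑(α+θ₄)) * I))
          * (Complex.exp ((α:ℝ) * I) * Complex.exp ((↑(α+θ₃)) * I)))
      < Complex.normSq
        (Complex.exp ((α:ℝ) * I) * Complex.exp ((↑(α+θ₃)) * I)
          - Complex.exp ((↑(α+θ₂)) * I) * Complex.exp ((↑(α+θ₄)) * I)) := by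
  have hpi := Real.pi_pos
  set q₁ := Complex.exp ((α:ℝ) * I) with hq₁
  set q₂ := Complex.exp ((↑(α+θ₂)) * I) with hq₂
  set q₃ := Complex.exp ((↑(α+θ₃)) * I) with hq₃
  set q₄ := Complex.exp ((↑(α+θ₄)) * I) with hq₄
  have habs₁ : ‖q₁‖ = 1 := Complex.norm_exp_ofReal_mul_I α
  have habs₂ : ‖q₂‖ = 1 := Complex.norm_exp_ofReal_mul_I _
  have habs₃ : ‖q₃‖ = 1 := Complex.norm_exp_ofReal_mul_I _
  have habs₄ : ‖q₄‖ = 1 := Complex.norm_exp_ofReal_mul_I _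
  have hne₁ : q₁ ≠ 0 := Complex.exp_ne_zero _
  have hne₂ : q₂ ≠ 0 := Complex.exp_ne_zero _
  have hne₃ : q₃ ≠ 0 := Complex.exp_ne_zero _
  have hne₄ : q₄ ≠ 0 := Complex.exp_ne_zero _
  have hc₁ : (starRingEnd ℂ) q₁ = q₁⁻¹ := eq_inv_of_mul_eq_one_left
    (by rw [mul_comm]; exact unit_mul_conj habs₁)
  have hc₂ : (starRingEnd ℂ) q₂ = q₂⁻¹ := eq_inv_of_mul_eq_one_left
    (by rw [mul_comm]; exact unit_mul_conj habs₂)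
  have hc₃ : (starRingEnd ℂ) q₃ = q₃⁻¹ := eq_inv_of_mul_eq_one_left
    (by rw [mul_comm]; exact unit_mul_conj habs₃)
  have hc₄ : (starRingEnd ℂ) q₄ = q₄⁻¹ := eq_inv_of_mul_eq_one_left
    (by rw [mul_comm]; exact unit_mul_conj habs₄)
  set N := (q₁ + q₃) * (q₂ * q₄) - (q₂ + q₄) * (q₁ * q₃) with hN
  set D := q₁ * q₃ - q₂ * q₄ with hD
  have iv₁ : q₁⁻¹ * q₁ = 1 := inv_mul_cancel₀ hne₁
  have iv₂ : q₂⁻¹ * q₂ = 1 := inv_mul_cancel₀ hne₂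
  have iv₃ : q₃⁻¹ * q₃ = 1 := inv_mul_cancel₀ hne₃
  have iv₄ : q₄⁻¹ * q₄ = 1 := inv_mul_cancel₀ hne₄
  have hcD : (starRingEnd ℂ) D * (q₁*q₂*q₃*q₄) = q₂*q₄ - q₁*q₃ := by
    simp only [hD, map_sub, map_mul, hc₁, hc₂, hc₃, hc₄]
    calc (q₁⁻¹ * q₃⁻¹ - q₂⁻¹ * q₄⁻¹) * (q₁*q₂*q₃*q₄)
        = q₂*q₄*((q₁⁻¹*q₁)*(q₃⁻¹*q₃)) - q₁*q₃*((q₂⁻¹*q₂)*(q₄⁻¹*q₄)) := by ring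
      _ = q₂*q₄ - q₁*q₃ := by rw [iv₁, iv₂, iv₃, iv₄]; ring
  have hcN : (starRingEnd ℂ) N * (q₁*q₂*q₃*q₄) = (q₁ + q₃) - (q₂ + q₄) := by
    simp only [hN, map_sub, map_add, map_mul, hc₁, hc₂, hc₃, hc₄]
    calc ((q₁⁻¹ + q₃⁻¹) * (q₂⁻¹ * q₄⁻¹) - (q₂⁻¹ + q₄⁻¹) * (q₁⁻¹ * q₃⁻¹)) * (q₁*q₂*q₃*q₄)
        = (q₃*((q₁⁻¹*q₁)*(q₂⁻¹*q₂)*(q₄⁻¹*q₄)) + q₁*((q₃⁻¹*q₃)*(q₂⁻¹*q₂)*(q₄⁻¹*q₄)))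
          - (q₄*((q₂⁻¹*q₂)*(q₁⁻¹*q₁)*(q₃⁻¹*q₃)) + q₂*((q₄⁻¹*q₄)*(q₁⁻¹*q₁)*(q₃⁻¹*q₃))) := by
          ring
      _ = (q₁ + q₃) - (q₂ + q₄) := by rw [iv₁, iv₂, iv₃, iv₄]; ring
  have key : ((Complex.normSq D : ℂ) - (Complex.normSq N : ℂ)) * (q₁*q₂*q₃*q₄)
      = (q₁-q₂)*(q₂-q₃)*(q₃-q₄)*(q₁-q₄) := by
    rw [← Complex.mul_conj D, ← Complex.mul_conj N]
    linear_combination D * hcD - N * hcN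
  -- sine side
  have hI4 : (I : ℂ)^4 = 1 := by
    rw [show (4:ℕ) = 2*2 from rfl, pow_mul, Complex.I_sq]; norm_num
  set s₁ := Real.sin (θ₂/2) with hs₁
  set s₂ := Real.sin ((θ₃-θ₂)/2) with hs₂
  set s₃ := Real.sin ((θ₄-θ₃)/2) with hs₃
  set s₄ := Real.sin (θ₄/2) with hs₄
  set E₁ := Complex.exp ((((α + (α+θ₂))/2 : ℝ) : ℂ) * I) with hE₁
  set E₂ := Complex.exp (((((α+θ₂) + (α+θ₃))/2 : ℝ) : ℂ) * I) with hE₂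
  set E₃ := Complex.exp (((((α+θ₃) + (α+θ₄))/2 : ℝ) : ℂ) * I) with hE₃
  set E₄ := Complex.exp ((((α + (α+θ₄))/2 : ℝ) : ℂ) * I) with hE₄
  have h12 : q₁ - q₂ = -(2 * (s₁:ℂ) * I * E₁) := by
    rw [hq₁, hq₂, exp_sub_exp α (α+θ₂), show (α - (α+θ₂))/2 = -(θ₂/2) by ring,
      Real.sin_neg, ← hs₁, ← hE₁, Complex.ofReal_neg]
    ring
  have h23' : q₂ - q₃ = -(2 * (s₂:ℂ) * I * E₂) := by
    rw [hq₂, hq₃, exp_sub_exp (α+θ₂) (α+θ₃), show ((α+θ₂) - (α+θ₃))/2 = -((θ₃-θ₂)/2) by ring,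
      Real.sin_neg, ← hs₂, ← hE₂, Complex.ofReal_neg]
    ring
  have h34' : q₃ - q₄ = -(2 * (s₃:ℂ) * I * E₃) := by
    rw [hq₃, hq₄, exp_sub_exp (α+θ₃) (α+θ₄), show ((α+θ₃) - (α+θ₄))/2 = -((θ₄-θ₃)/2) by ring,
      Real.sin_neg, ← hs₃, ← hE₃, Complex.ofReal_neg]
    ring
  have h14 : q₁ - q₄ = -(2 * (s₄:ℂ) * I * E₄) := by
    rw [hq₁, hq₄, exp_sub_exp α (α+θ₄), show (α - (α+θ₄))/2 = -(θ₄/2) by ring,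
      Real.sin_neg, ← hs₄, ← hE₄, Complex.ofReal_neg]
    ring
  have hprod : E₁ * E₂ * E₃ * E₄ = q₁*q₂*q₃*q₄ := by
    rw [hE₁, hE₂, hE₃, hE₄, hq₁, hq₂, hq₃, hq₄, ← Complex.exp_add, ← Complex.exp_add,
      ← Complex.exp_add, ← Complex.exp_add, ← Complex.exp_add, ← Complex.exp_add]
    congr 1
    push_cast
    ring
  have sineside : ((16 * (s₁ * s₂ * s₃ * s₄) : ℝ) : ℂ) * (q₁*q₂*q₃*q₄)
      = (q₁-q₂)*(q₂-q₃)*(q₃-q₄)*(q₁-q₄) := by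
    rw [h12, h23', h34', h14, ← hprod, Complex.ofReal_mul, Complex.ofReal_mul,
      Complex.ofReal_mul, Complex.ofReal_mul, Complex.ofReal_ofNat]
    linear_combination (-(16 * (s₁:ℂ) * s₂ * s₃ * s₄ * (E₁*E₂*E₃*E₄))) * hI4
  have hqprod_ne : q₁*q₂*q₃*q₄ ≠ 0 := by
    simp [hne₁, hne₂, hne₃, hne₄]
  have main : (Complex.normSq D : ℂ) - (Complex.normSq N : ℂ)
      = ((16 * (s₁ * s₂ * s₃ * s₄) : ℝ) : ℂ) :=
    mul_right_cancel₀ hqprod_ne (by rw [key, sineside])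
  have mainR : Complex.normSq D - Complex.normSq N = 16 * (s₁ * s₂ * s₃ * s₄) := by
    exact_mod_cast main
  have hs₁p : 0 < s₁ := Real.sin_pos_of_pos_of_lt_pi (by linarith) (by linarith)
  have hs₂p : 0 < s₂ := Real.sin_pos_of_pos_of_lt_pi (by linarith) (by linarith)
  have hs₃p : 0 < s₃ := Real.sin_pos_of_pos_of_lt_pi (by linarith) (by linarith)
  have hs₄p : 0 < s₄ := Real.sin_pos_of_pos_of_lt_pi (by linarith) (by linarith)
  nlinarith [mul_pos (mul_pos (mul_pos hs₁p hs₂p) hs₃p) hs₄p]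

lemma antipodal_iff {β q₁ q₃ : ℂ} (hβ : ‖β‖ < 1) (h₁ : ‖q₁‖ = 1)
    (h₃ : ‖q₃‖ = 1) :
    moebius (-β) q₃ = -moebius (-β) q₁ ↔
      (q₁ + q₃) * (1 + (starRingEnd ℂ) β * β) + 2*β + 2*(starRingEnd ℂ) β * (q₁*q₃) = 0 := by
  have d₁ : 1 + (starRingEnd ℂ) β * q₁ ≠ 0 := denom_ne' hβ h₁.le
  have d₃ : 1 + (starRingEnd ℂ) β * q₃ ≠ 0 := denom_ne' hβ h₃.le
  have m₁ : moebius (-β) q₁ = (q₁ + β) / (1 + (starRingEnd ℂ) β * q₁) := by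
    rw [moebius, map_neg]; congr 1 <;> ring
  have m₃ : moebius (-β) q₃ = (q₃ + β) / (1 + (starRingEnd ℂ) β * q₃) := by
    rw [moebius, map_neg]; congr 1 <;> ring
  rw [m₁, m₃, ← neg_div, div_eq_div_iff d₃ d₁]
  constructor
  · intro h; linear_combination h
  · intro h; linear_combination h

lemma P1P2_ne (α θ₂ θ₃ θ₄ : ℝ) (h02 : 0 < θ₂) (h23 : θ₂ < θ₃) (h34 : θ₃ < θ₄)
    (h42 : θ₄ < 2 * Real.pi) :
    Complex.exp ((α:ℝ) * I) * Complex.exp ((↑(α+θ₃)) * I)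
      - Complex.exp ((↑(α+θ₂)) * I) * Complex.exp ((↑(α+θ₄)) * I) ≠ 0 := by
  have hpi := Real.pi_pos
  rw [← Complex.exp_add, ← Complex.exp_add, sub_ne_zero]
  intro h
  rw [Complex.exp_eq_exp_iff_exists_int] at h
  obtain ⟨n, hn⟩ := h
  have him : α + (α + θ₃) = (α + θ₂) + (α + θ₄) + n * (2 * Real.pi) := by
    have := congrArg Complex.im hn
    simpa using this
  have hlt : (n:ℝ) < 0 := by nlinarith
  have hgt : (-1:ℝ) < (n:ℝ) := by nlinarith
  have h1 : n < 0 := by exact_mod_cast hlt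
  have h2 : (-1:ℤ) < n := by exact_mod_cast hgt
  omega

lemma beta_mul_eq {β q₁ q₂ q₃ q₄ : ℂ}
    (e₁ : (q₁ + q₃) * (1 + (starRingEnd ℂ) β * β) + 2*β + 2*(starRingEnd ℂ) β * (q₁*q₃) = 0)
    (e₂ : (q₂ + q₄) * (1 + (starRingEnd ℂ) β * β) + 2*β + 2*(starRingEnd ℂ) β * (q₂*q₄) = 0) :
    β * (2*(q₁*q₃ - q₂*q₄))
      = (1 + (starRingEnd ℂ) β * β) * ((q₁+q₃)*(q₂*q₄) - (q₂+q₄)*(q₁*q₃)) := by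
  linear_combination (q₁*q₃) * e₂ - (q₂*q₄) * e₁

lemma T_unique {K T T' : ℝ} (hT1 : 1 ≤ T) (hT2 : T < 2) (hT1' : 1 ≤ T') (hT2' : T' < 2)
    (h : K * T^2 = T - 1) (h' : K * T'^2 = T' - 1) : T = T' := by
  have e : (T - 1) * T'^2 = (T' - 1) * T^2 := by linear_combination T^2 * h' - T'^2 * h
  have factored : (T - T') * (T + T' - T*T') = 0 := by linear_combination e
  have hpos : 0 < T + T' - T*T' := by nlinarith
  have := mul_eq_zero.mp factored
  rcases this with h0 | h0
  · linarith [sub_eq_zero.mp h0]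
  · linarith

lemma one_plus_conj_mul {β : ℂ} :
    1 + (starRingEnd ℂ) β * β = ((1 + Complex.normSq β : ℝ) : ℂ) := by
  rw [mul_comm, Complex.mul_conj]
  push_cast
  ring

lemma CS_abs {P : ℂ × ℂ × ℂ × ℂ} (hP : P ∈ CS) :
    ‖P.1‖ = 1 ∧ ‖P.2.1‖ = 1 ∧ ‖P.2.2.1‖ = 1 ∧
      ‖P.2.2.2‖ = 1 := by
  obtain ⟨h1, θ₂, θ₃, θ₄, _, _, _, _, e2, e3, e4⟩ := hP
  refine ⟨h1, ?_, ?_, ?_⟩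
  · rw [e2, norm_mul, h1, Complex.norm_exp_ofReal_mul_I, mul_one]
  · rw [e3, norm_mul, h1, Complex.norm_exp_ofReal_mul_I, mul_one]
  · rw [e4, norm_mul, h1, Complex.norm_exp_ofReal_mul_I, mul_one]

lemma T_exists {K : ℝ} (hK0 : 0 ≤ K) (hK : K < 1/4) :
    ∃ T : ℝ, 1 ≤ T ∧ T < 2 ∧ K * T^2 = T - 1 := by
  set S := Real.sqrt (1 - 4*K) with hS
  have hS2 : S^2 = 1 - 4*K := Real.sq_sqrt (by linarith)
  have hSpos : 0 < S := Real.sqrt_pos.mpr (by linarith)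
  have hSle : S ≤ 1 := by nlinarith
  refine ⟨2/(1+S), ?_, ?_, ?_⟩
  · rw [le_div_iff₀ (by linarith)]; linarith
  · rw [div_lt_iff₀ (by linarith)]; linarith
  · have h1S : (1+S) ≠ 0 := by positivity
    field_simp
    nlinarith [hS2]


set_option maxHeartbeats 4000000 in
/-- The evaluation map `(P, g_β) ↦ g_β(P)` is a bijection from
`CS₀ × D` onto `CS`. -/
theorem evaluation_map_bijective :
    Set.BijOn
      (fun Pβ : (ℂ × ℂ × ℂ × ℂ) × ℂ =>
        (moebius Pβ.2 Pβ.1.1, moebius Pβ.2 Pβ.1.2.1,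
         moebius Pβ.2 Pβ.1.2.2.1, moebius Pβ.2 Pβ.1.2.2.2))
      (CScore ×ˢ Metric.ball (0:ℂ) 1) CS := by
  refine ⟨?_, ?_, ?_⟩
  · -- MapsTo
    rintro ⟨P, β⟩ hmem
    rw [Set.mem_prod] at hmem
    obtain ⟨hP, hβ⟩ := hmem
    have hβ' : ‖β‖ < 1 := by
      have := Metric.mem_ball.mp hβ
      rwa [Complex.dist_eq, sub_zero] at this
    exact moebius_mem_CS hβ' hP.1
  · -- InjOn
    rintro ⟨P, β⟩ hm ⟨P', γ⟩ hm' heq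
    rw [Set.mem_prod] at hm hm'
    obtain ⟨hP, hβ⟩ := hm
    obtain ⟨hP', hγ⟩ := hm'
    have hβ' : ‖β‖ < 1 := by
      have := Metric.mem_ball.mp hβ
      rwa [Complex.dist_eq, sub_zero] at this
    have hγ' : ‖γ‖ < 1 := by
      have := Metric.mem_ball.mp hγ
      rwa [Complex.dist_eq, sub_zero] at this
    obtain ⟨hPCS, hP31, hP42⟩ := hP
    obtain ⟨hPCS', hP31', hP42'⟩ := hP'
    obtain ⟨a1, a2, a3, a4⟩ := CS_abs hPCS
    obtain ⟨a1', a2', a3', a4'⟩ := CS_abs hPCS'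
    simp only [Prod.mk.injEq] at heq
    obtain ⟨c1, c2, c3, c4⟩ := heq
    set q₁ := moebius β P.1 with hq1
    set q₂ := moebius β P.2.1 with hq2
    set q₃ := moebius β P.2.2.1 with hq3
    set q₄ := moebius β P.2.2.2 with hq4
    have b1 : ‖q₁‖ = 1 := moebius_abs hβ' a1
    have b2 : ‖q₂‖ = 1 := moebius_abs hβ' a2
    have b3 : ‖q₃‖ = 1 := moebius_abs hβ' a3
    have b4 : ‖q₄‖ = 1 := moebius_abs hβ' a4
    have hp1 : moebius (-β) q₁ = P.1 := moebius_moebius hβ' a1.le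
    have hp2 : moebius (-β) q₂ = P.2.1 := moebius_moebius hβ' a2.le
    have hp3 : moebius (-β) q₃ = P.2.2.1 := moebius_moebius hβ' a3.le
    have hp4 : moebius (-β) q₄ = P.2.2.2 := moebius_moebius hβ' a4.le
    have hp1' : moebius (-γ) q₁ = P'.1 := by rw [c1]; exact moebius_moebius hγ' a1'.le
    have hp2' : moebius (-γ) q₂ = P'.2.1 := by rw [c2]; exact moebius_moebius hγ' a2'.le
    have hp3' : moebius (-γ) q₃ = P'.2.2.1 := by rw [c3]; exact moebius_moebius hγ' a3'.le
    have hp4' : moebius (-γ) q₄ = P'.2.2.2 := by rw [c4]; exact moebius_moebius hγ' a4'.le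
    have e₁β := (antipodal_iff hβ' b1 b3).mp (by rw [hp3, hp1]; exact hP31)
    have e₂β := (antipodal_iff hβ' b2 b4).mp (by rw [hp4, hp2]; exact hP42)
    have e₁γ := (antipodal_iff hγ' b1 b3).mp (by rw [hp3', hp1']; exact hP31')
    have e₂γ := (antipodal_iff hγ' b2 b4).mp (by rw [hp4', hp2']; exact hP42')
    -- the image is in CS
    have hQCS := moebius_mem_CS hβ' hPCS
    obtain ⟨hh1, φ₂, φ₃, φ₄, g02, g23, g34, g42, f2, f3, f4⟩ := hQCS
    set α' := Complex.arg q₁ with hα'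
    have hx1 : q₁ = Complex.exp ((α' : ℝ) * I) := by
      rw [hα']
      have := Complex.norm_mul_exp_arg_mul_I q₁
      rw [b1, Complex.ofReal_one, one_mul] at this
      exact this.symm
    have hx2 : q₂ = Complex.exp ((↑(α' + φ₂)) * I) := by
      have f2' : q₂ = q₁ * Complex.exp ((φ₂:ℝ) * I) := f2
      rw [f2', hx1, ← Complex.exp_add]; congr 1; push_cast; ring
    have hx3 : q₃ = Complex.exp ((↑(α' + φ₃)) * I) := by
      have f3' : q₃ = q₁ * Complex.exp ((φ₃:ℝ) * I) := f3
      rw [f3', hx1, ← Complex.exp_add]; congr 1; push_cast; ring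
    have hx4 : q₄ = Complex.exp ((↑(α' + φ₄)) * I) := by
      have f4' : q₄ = q₁ * Complex.exp ((φ₄:ℝ) * I) := f4
      rw [f4', hx1, ← Complex.exp_add]; congr 1; push_cast; ring
    have hne : q₁*q₃ - q₂*q₄ ≠ 0 := by
      rw [hx1, hx2, hx3, hx4]
      exact P1P2_ne α' φ₂ φ₃ φ₄ g02 g23 g34 g42
    have h2D : (2:ℂ) * (q₁*q₃ - q₂*q₄) ≠ 0 := mul_ne_zero two_ne_zero hne
    have hbm := beta_mul_eq e₁β e₂β
    have hgm := beta_mul_eq e₁γ e₂γ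
    set N := (q₁+q₃)*(q₂*q₄) - (q₂+q₄)*(q₁*q₃) with hN
    set Dd := q₁*q₃ - q₂*q₄ with hDd
    have hM : 0 < Complex.normSq (2*Dd) := Complex.normSq_pos.mpr h2D
    set K := Complex.normSq N / Complex.normSq (2*Dd) with hK
    have hrel : ∀ δ : ℂ, δ * (2*Dd) = (1 + (starRingEnd ℂ) δ * δ) * N →
        K * (1 + Complex.normSq δ)^2 = (1 + Complex.normSq δ) - 1 := by
      intro δ h
      rw [one_plus_conj_mul] at h
      have h2 : Complex.normSq δ * Complex.normSq (2*Dd)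
          = (1 + Complex.normSq δ) * (1 + Complex.normSq δ) * Complex.normSq N := by
        calc Complex.normSq δ * Complex.normSq (2*Dd)
            = Complex.normSq (δ * (2*Dd)) := (Complex.normSq_mul _ _).symm
          _ = Complex.normSq (((1 + Complex.normSq δ : ℝ) : ℂ) * N) := by rw [h]
          _ = (1 + Complex.normSq δ) * (1 + Complex.normSq δ) * Complex.normSq N := by
              rw [Complex.normSq_mul, Complex.normSq_ofReal]
      rw [hK, div_mul_eq_mul_div, div_eq_iff hM.ne']
      nlinarith [h2]
    have relβ := hrel β hbm
    have relγ := hrel γ hgm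
    have hTβ2 : 1 + Complex.normSq β < 2 := by
      have := Complex.sq_norm β
      nlinarith [norm_nonneg β]
    have hTγ2 : 1 + Complex.normSq γ < 2 := by
      have := Complex.sq_norm γ
      nlinarith [norm_nonneg γ]
    have hTT : 1 + Complex.normSq β = 1 + Complex.normSq γ :=
      T_unique (by linarith [Complex.normSq_nonneg β]) hTβ2
        (by linarith [Complex.normSq_nonneg γ]) hTγ2 relβ relγ
    have hβγ : β = γ := by
      rw [one_plus_conj_mul] at hbm hgm
      rw [hTT] at hbm
      have := hbm.trans hgm.symm
      exact mul_right_cancel₀ h2D this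
    have hPP : P = P' := by
      have k1 : P.1 = P'.1 := by rw [← hp1, ← hp1', hβγ]
      have k2 : P.2.1 = P'.2.1 := by rw [← hp2, ← hp2', hβγ]
      have k3 : P.2.2.1 = P'.2.2.1 := by rw [← hp3, ← hp3', hβγ]
      have k4 : P.2.2.2 = P'.2.2.2 := by rw [← hp4, ← hp4', hβγ]
      exact Prod.ext k1 (Prod.ext k2 (Prod.ext k3 k4))
    exact Prod.ext hPP hβγ
  · -- SurjOn
    intro Q hQ
    have hQCS : Q ∈ CS := hQ
    obtain ⟨h1, θ₂, θ₃, θ₄, h02, h23, h34, h42, e2, e3, e4⟩ := hQ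
    obtain ⟨a1, a2, a3, a4⟩ := CS_abs hQCS
    set q₁ := Q.1 with hq1
    set q₂ := Q.2.1 with hq2
    set q₃ := Q.2.2.1 with hq3
    set q₄ := Q.2.2.2 with hq4
    set α := Complex.arg Q.1 with hα
    have hx1 : q₁ = Complex.exp ((α : ℝ) * I) := by
      have := Complex.norm_mul_exp_arg_mul_I Q.1
      rw [h1, Complex.ofReal_one, one_mul] at this
      exact this.symm
    have hx2 : q₂ = Complex.exp ((↑(α + θ₂)) * I) := by
      rw [e2, hx1, ← Complex.exp_add]; congr 1; push_cast; ring
    have hx3 : q₃ = Complex.exp ((↑(α + θ₃)) * I) := by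
      rw [e3, hx1, ← Complex.exp_add]; congr 1; push_cast; ring
    have hx4 : q₄ = Complex.exp ((↑(α + θ₄)) * I) := by
      rw [e4, hx1, ← Complex.exp_add]; congr 1; push_cast; ring
    have hne : q₁*q₃ - q₂*q₄ ≠ 0 := by
      rw [hx1, hx2, hx3, hx4]
      exact P1P2_ne α θ₂ θ₃ θ₄ h02 h23 h34 h42
    set N := (q₁+q₃)*(q₂*q₄) - (q₂+q₄)*(q₁*q₃) with hN
    set Dd := q₁*q₃ - q₂*q₄ with hDd
    have h2D : (2:ℂ) * Dd ≠ 0 := mul_ne_zero two_ne_zero hne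
    have hkey : Complex.normSq N < Complex.normSq Dd := by
      rw [hN, hDd, hx1, hx2, hx3, hx4]
      exact key_ineq α θ₂ θ₃ θ₄ h02 h23 h34 h42
    set A := N / (2*Dd) with hAdef
    set K := Complex.normSq A with hKdef
    have hDpos : 0 < Complex.normSq Dd := Complex.normSq_pos.mpr hne
    have hn2 : Complex.normSq (2*Dd) = 4 * Complex.normSq Dd := by
      rw [Complex.normSq_mul]
      norm_num [Complex.normSq_apply]
    have hK0 : 0 ≤ K := Complex.normSq_nonneg A
    have hKlt : K < 1/4 := by
      rw [hKdef, hAdef, Complex.normSq_div, hn2, div_lt_iff₀ (by positivity)]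
      linarith
    obtain ⟨T, hT1, hT2, hTq⟩ := T_exists hK0 hKlt
    set β := (T:ℂ) * A with hβdef
    have hnormβ : Complex.normSq β = T - 1 := by
      rw [hβdef, Complex.normSq_mul, Complex.normSq_ofReal, ← hKdef]
      linear_combination hTq
    have habsβ : ‖β‖ < 1 := by
      have := Complex.sq_norm β
      nlinarith [norm_nonneg β]
    have ht : 1 + (starRingEnd ℂ) β * β = (T:ℂ) := by
      rw [one_plus_conj_mul, hnormβ]
      norm_num
    have hA1 : A * (2*Dd) = N := div_mul_cancel₀ _ h2D
    have hcamul : (starRingEnd ℂ) A * (starRingEnd ℂ) (2*Dd) = (starRingEnd ℂ) N := by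
      rw [← map_mul]; exact congrArg _ hA1
    have e1conj := conjD_mul a1 a2 a3 a4
    have e2conj := conjN_mul a1 a2 a3 a4
    have hc2 : (starRingEnd ℂ) (2*Dd) = 2 * (starRingEnd ℂ) Dd := by
      rw [map_mul, map_ofNat]
    have hA2 : (starRingEnd ℂ) A * (2*Dd) = (q₂+q₄) - (q₁+q₃) := by
      have hcalc : (starRingEnd ℂ) A * (2*(q₂*q₄ - q₁*q₃)) = (q₁+q₃) - (q₂+q₄) := by
        calc (starRingEnd ℂ) A * (2*(q₂*q₄ - q₁*q₃))
            = (starRingEnd ℂ) A * (2*((starRingEnd ℂ) Dd * (q₁*q₂*q₃*q₄))) := by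
              rw [hDd, e1conj]
          _ = ((starRingEnd ℂ) A * (starRingEnd ℂ) (2*Dd)) * (q₁*q₂*q₃*q₄) := by
              rw [hc2]; ring
          _ = (starRingEnd ℂ) N * (q₁*q₂*q₃*q₄) := by rw [hcamul]
          _ = (q₁+q₃) - (q₂+q₄) := by rw [hN]; exact e2conj
      linear_combination -hcalc + ((starRingEnd ℂ) A * 2) * hDd
    have key1 : ((q₁+q₃) + 2*A + 2*(starRingEnd ℂ) A*(q₁*q₃)) * (2*Dd) = 0 := by
      linear_combination 2*hA1 + (2*(q₁*q₃))*hA2 + 2*hN + (2*(q₁+q₃))*hDd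
    have key2 : ((q₂+q₄) + 2*A + 2*(starRingEnd ℂ) A*(q₂*q₄)) * (2*Dd) = 0 := by
      linear_combination 2*hA1 + (2*(q₂*q₄))*hA2 + 2*hN + (2*(q₂+q₄))*hDd
    have key1' : (q₁+q₃) + 2*A + 2*(starRingEnd ℂ) A*(q₁*q₃) = 0 :=
      (mul_eq_zero.mp key1).resolve_right h2D
    have key2' : (q₂+q₄) + 2*A + 2*(starRingEnd ℂ) A*(q₂*q₄) = 0 :=
      (mul_eq_zero.mp key2).resolve_right h2D
    have hcβ : (starRingEnd ℂ) β = (T:ℂ) * (starRingEnd ℂ) A := by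
      rw [hβdef, map_mul, Complex.conj_ofReal]
    have e₁ : (q₁ + q₃) * (1 + (starRingEnd ℂ) β * β) + 2*β
        + 2*(starRingEnd ℂ) β * (q₁*q₃) = 0 := by
      rw [ht, hβdef, hcβ]
      linear_combination (T:ℂ) * key1'
    have e₂ : (q₂ + q₄) * (1 + (starRingEnd ℂ) β * β) + 2*β
        + 2*(starRingEnd ℂ) β * (q₂*q₄) = 0 := by
      rw [ht, hβdef, hcβ]
      linear_combination (T:ℂ) * key2'
    have hnegβ : ‖-β‖ < 1 := by rwa [norm_neg]
    refine ⟨((moebius (-β) q₁, moebius (-β) q₂, moebius (-β) q₃, moebius (-β) q₄), β),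
      Set.mem_prod.mpr ⟨⟨?_, ?_, ?_⟩, ?_⟩, ?_⟩
    · exact moebius_mem_CS hnegβ hQCS
    · exact (antipodal_iff habsβ a1 a3).mpr e₁
    · exact (antipodal_iff habsβ a2 a4).mpr e₂
    · rw [Metric.mem_ball, Complex.dist_eq, sub_zero]; exact habsβ
    · show (moebius β (moebius (-β) q₁), moebius β (moebius (-β) q₂),
        moebius β (moebius (-β) q₃), moebius β (moebius (-β) q₄)) = Q
      have r1 : moebius β (moebius (-β) q₁) = q₁ := by
        have := moebius_moebius hnegβ a1.le; rwa [neg_neg] at this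
      have r2 : moebius β (moebius (-β) q₂) = q₂ := by
        have := moebius_moebius hnegβ a2.le; rwa [neg_neg] at this
      have r3 : moebius β (moebius (-β) q₃) = q₃ := by
        have := moebius_moebius hnegβ a3.le; rwa [neg_neg] at this
      have r4 : moebius β (moebius (-β) q₄) = q₄ := by
        have := moebius_moebius hnegβ a4.le; rwa [neg_neg] at this
      rw [r1, r2, r3, r4]
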